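/- arXiv:2603.29896 — 2 statements merged into one kernel-verified Lean document; each statement's English description precedes it below -/
import Mathlib

section
/- Let M be a finite ℤ_d-module with an alternating form φ, and let τ : G → M and τ' : G' → M be two Heisenberg extensions of (M,φ). Then there exists a group isomorphism ι : G → G' with τ' ∘ ι = τ. -/
/-- `d̄`: equals `d` if `d` is odd and `2d` if `d` is even. -/
def dbar (d : ℕ) : ℕ := if d % 2 = 1 then d else 2 * d

lemma zmod_baer (n : ℕ) [NeZero n] : Module.Baer (ZMod n) (ZMod n) := by
  haveI : IsPrincipalIdealRing (ZMod n) :=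
    IsPrincipalIdealRing.of_surjective (Int.castRingHom (ZMod n)) ZMod.intCast_surjective
  intro I g
  obtain ⟨a, ha⟩ := (IsPrincipalIdealRing.principal I).principal
  subst ha
  have haI : a ∈ Ideal.span {a} := Ideal.subset_span (Set.mem_singleton a)
  set b : ZMod n := g ⟨a, haI⟩ with hb
  -- the annihilator argument
  set gcd : ℕ := Nat.gcd a.val n with hgcd
  have hgcd_dvd_a : gcd ∣ a.val := Nat.gcd_dvd_left _ _
  have hgcd_dvd_n : gcd ∣ n := Nat.gcd_dvd_right _ _
  have hann : ((n / gcd : ℕ) : ZMod n) * a = 0 := by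
    conv_lhs => rw [← ZMod.natCast_rightInverse a]
    rw [← Nat.cast_mul, ZMod.natCast_eq_zero_iff]
    obtain ⟨t, ht⟩ := hgcd_dvd_a
    refine ⟨t, ?_⟩
    rw [ht, ← mul_assoc, Nat.div_mul_cancel hgcd_dvd_n]
  have hann_b : ((n / gcd : ℕ) : ZMod n) * b = 0 := by
    have : ((n / gcd : ℕ) : ZMod n) • (⟨a, haI⟩ : Ideal.span {a}) = 0 := by
      apply Subtype.ext
      simpa using hann
    calc ((n / gcd : ℕ) : ZMod n) * b = g (((n / gcd : ℕ) : ZMod n) • ⟨a, haI⟩) := by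
          rw [map_smul]; rfl
      _ = 0 := by rw [this, map_zero]
  -- hence gcd ∣ b.val
  have hgcd_b : gcd ∣ b.val := by
    have h1 : (((n / gcd) * b.val : ℕ) : ZMod n) = 0 := by
      push_cast
      rw [ZMod.natCast_rightInverse b]
      exact hann_b
    rw [ZMod.natCast_eq_zero_iff] at h1
    obtain ⟨k, hk⟩ := h1
    have hgcd_pos : 0 < gcd := Nat.gcd_pos_of_pos_right _ (Nat.pos_of_ne_zero (NeZero.ne n))
    have hng_pos : 0 < n / gcd := Nat.div_pos (Nat.le_of_dvd (Nat.pos_of_ne_zero (NeZero.ne n)) hgcd_dvd_n) hgcd_pos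
    refine ⟨k, ?_⟩
    have : (n / gcd) * b.val = (n / gcd) * (gcd * k) := by
      rw [hk]
      conv_rhs => rw [← mul_assoc, Nat.div_mul_cancel hgcd_dvd_n]
    exact Nat.eq_of_mul_eq_mul_left hng_pos this
  -- gcd is a ZMod-multiple of a, by Bezout
  have hbezout : ∃ u : ZMod n, (gcd : ZMod n) = u * a := by
    refine ⟨((Nat.gcdA a.val n : ℤ) : ZMod n), ?_⟩
    have h := Nat.gcd_eq_gcd_ab a.val n
    have h2 : ((gcd : ℤ) : ZMod n) = ((a.val * Nat.gcdA a.val n + n * Nat.gcdB a.val n : ℤ) : ZMod n) := by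
      rw [← h]
    push_cast at h2
    rw [ZMod.natCast_self] at h2
    simp only [zero_mul, add_zero] at h2
    rw [h2, show ((a.val : ℕ):ZMod n) = a from ZMod.natCast_rightInverse a]
    ring
  obtain ⟨u, hu⟩ := hbezout
  obtain ⟨k, hk⟩ := hgcd_b
  have hba : b = ((k : ℕ) : ZMod n) * u * a := by
    have : b = ((gcd * k : ℕ) : ZMod n) := by
      rw [← hk, ZMod.natCast_rightInverse b]
    rw [this]
    push_cast
    rw [hu]; ring
  -- the extension
  set cc : ZMod n := ((k : ℕ) : ZMod n) * u with hcc
  refine ⟨{ toFun := fun x => cc * x,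
            map_add' := fun x y => mul_add cc x y,
            map_smul' := fun r x => by simp [mul_left_comm, mul_comm, mul_assoc] }, ?_⟩
  intro x hx
  obtain ⟨y, hy⟩ := Ideal.mem_span_singleton'.mp hx
  have hxy : (⟨x, hx⟩ : Ideal.span {a}) = y • ⟨a, haI⟩ := by
    apply Subtype.ext
    simpa using hy.symm
  simp only [LinearMap.coe_mk, AddHom.coe_mk]
  rw [hxy, map_smul]
  have : g ⟨a, haI⟩ = b := rfl
  rw [this]  -- smul on ZMod n is mul
  rw [smul_eq_mul, hba, ← hy]
  ring

lemma zmod_injective (n : ℕ) [NeZero n] : Module.Injective (ZMod n) (ZMod n) :=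
  (zmod_baer n).injective

lemma exists_retraction (n : ℕ) [NeZero n] {E : Type} [CommGroup E]
    (hexp : ∀ e : E, e ^ n = 1) (c : E) (hc : orderOf c = n) :
    ∃ r : E →* Multiplicative (ZMod n), Multiplicative.toAdd (r c) = 1 := by
  have hm : Module (ZMod n) (Additive E) := AddCommGroup.zmodModule (by
    intro x
    show (n • x) = 0
    have : x.toMul ^ n = 1 := hexp _
    rw [← ofMul_toMul x, ← ofMul_pow, this, ofMul_one])
  letI := hm
  have hsmul : ∀ (x : ZMod n) (a : Additive E), x • a = x.val • a := by
    intro x a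
    conv_lhs => rw [← ZMod.natCast_rightInverse x]
    rw [Nat.cast_smul_eq_nsmul]
  let i : ZMod n →ₗ[ZMod n] Additive E :=
    LinearMap.toSpanSingleton (ZMod n) (Additive E) (Additive.ofMul c)
  have hinj : Function.Injective i := by
    intro x y hxy
    have h0 : (x - y) • (Additive.ofMul c) = 0 := by
      rw [sub_smul]
      have : i x = x • Additive.ofMul c := rfl
      rw [show (x • Additive.ofMul c : Additive E) = i x from rfl,
        show (y • Additive.ofMul c : Additive E) = i y from rfl, hxy, sub_self]
    rw [hsmul] at h0
    have h1 : c ^ (x - y).val = 1 := by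
      have := congrArg Additive.toMul h0
      simpa [toMul_nsmul] using this
    have h2 : n ∣ (x - y).val := by simpa [hc] using orderOf_dvd_of_pow_eq_one h1
    have h3 : (x - y).val < n := ZMod.val_lt _
    have h4 : (x - y).val = 0 := Nat.eq_zero_of_dvd_of_lt h2 h3
    exact sub_eq_zero.mp ((ZMod.val_eq_zero _).mp h4)
  obtain ⟨h, hh⟩ := (zmod_injective n).out i hinj LinearMap.id
  refine ⟨AddMonoidHom.toMultiplicativeRight h.toAddMonoidHom, ?_⟩
  show h (Additive.ofMul c) = 1
  have : Additive.ofMul c = i 1 := by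
    show Additive.ofMul c = (1 : ZMod n) • Additive.ofMul c
    rw [one_smul]
  rw [this, hh]
  rfl


/-- Let `M` be a finite `ℤ_d`-module with an alternating form `φ`,
and let `τ : G → M` and `τ' : G' → M` be two Heisenberg extensions of `(M, φ)`.  Then
there exists a group isomorphism `ι : G → G'` with `τ' ∘ ι = τ`.

A Heisenberg extension of `(M, φ)` is a group `G` with a surjective homomorphism
`τ : G → M` such that (a) `ker τ` is cyclic of order `d̄` with a distinguished
generator `ζ_G`, (b) `g h = ζ_G^{2·φ(τ(g),τ(h))} h g` for all `g, h ∈ G` (the exponent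
is computed via the canonical integer lift `ZMod.val`, well defined since `ζ_G` has
order `d̄` and `d̄ ∣ 2d`), and (c) every element of `M` has a `τ`-preimage in `G` of
the same order. -/
theorem heisenberg_extension_unique
    (d : ℕ) [NeZero d]
    (M : Type) [AddCommGroup M] [Module (ZMod d) M] [Finite M]
    (φ : M →ₗ[ZMod d] M →ₗ[ZMod d] ZMod d)
    (halt : ∀ m : M, φ m m = 0)
    (G G' : Type) [Group G] [Group G']
    (τ : G →* Multiplicative M) (τ' : G' →* Multiplicative M)
    (zG : G) (zG' : G')
    (hsurj : Function.Surjective τ) (hsurj' : Function.Surjective τ')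
    (hker : MonoidHom.ker τ = Subgroup.zpowers zG)
    (hker' : MonoidHom.ker τ' = Subgroup.zpowers zG')
    (hord : orderOf zG = dbar d) (hord' : orderOf zG' = dbar d)
    (hcomm : ∀ g h : G,
      g * h = zG ^ (2 * (φ (Multiplicative.toAdd (τ g)) (Multiplicative.toAdd (τ h))).val)
        * (h * g))
    (hcomm' : ∀ g h : G',
      g * h = zG' ^ (2 * (φ (Multiplicative.toAdd (τ' g)) (Multiplicative.toAdd (τ' h))).val)
        * (h * g))
    (hlift : ∀ m : M, ∃ g : G, τ g = Multiplicative.ofAdd m ∧ orderOf g = addOrderOf m)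
    (hlift' : ∀ m : M, ∃ g : G', τ' g = Multiplicative.ofAdd m ∧ orderOf g = addOrderOf m) :
    ∃ ι : G ≃* G', ∀ g : G, τ' (ι g) = τ g := by
  classical
  set n := dbar d with hn
  have hd0 : d ≠ 0 := NeZero.ne d
  have hdn : d ∣ n := by
    rw [hn]; unfold dbar; split
    · exact dvd_refl d
    · exact dvd_mul_left d 2
  have hn0 : n ≠ 0 := by
    rw [hn]; unfold dbar; split
    · exact hd0
    · simpa using hd0
  haveI : NeZero n := ⟨hn0⟩
  -- basic facts about the central elements
  have hτzG : τ zG = 1 := by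
    have : zG ∈ MonoidHom.ker τ := by rw [hker]; exact Subgroup.mem_zpowers zG
    exact this
  have hτ'zG' : τ' zG' = 1 := by
    have : zG' ∈ MonoidHom.ker τ' := by rw [hker']; exact Subgroup.mem_zpowers zG'
    exact this
  have hzGc : ∀ g : G, zG * g = g * zG := by
    intro g
    have h := hcomm g zG
    simp only [hτzG, toAdd_one, map_zero, ZMod.val_zero, mul_zero, pow_zero, one_mul] at h
    exact h.symm
  have hzG'c : ∀ g : G', zG' * g = g * zG' := by
    intro g
    have h := hcomm' g zG'
    simp only [hτ'zG', toAdd_one, map_zero, ZMod.val_zero, mul_zero, pow_zero, one_mul] at h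
    exact h.symm
  have hkerG : ∀ g : G, τ g = 1 → ∃ k : ℤ, zG ^ k = g := by
    intro g hg
    have : g ∈ MonoidHom.ker τ := hg
    rw [hker] at this
    exact Subgroup.mem_zpowers_iff.mp this
  have hkerG' : ∀ g : G', τ' g = 1 → ∃ k : ℤ, zG' ^ k = g := by
    intro g hg
    have : g ∈ MonoidHom.ker τ' := hg
    rw [hker'] at this
    exact Subgroup.mem_zpowers_iff.mp this
  have hzGpow : ∀ k : ℤ, (n:ℤ) ∣ k → zG ^ k = 1 := by
    intro k hk
    exact orderOf_dvd_iff_zpow_eq_one.mp (by rwa [hord])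
  have hzG'pow : ∀ k : ℤ, (n:ℤ) ∣ k → zG' ^ k = 1 := by
    intro k hk
    exact orderOf_dvd_iff_zpow_eq_one.mp (by rwa [hord'])
  have hzG'dvd : ∀ k : ℤ, zG' ^ k = 1 → (n:ℤ) ∣ k := by
    intro k hk
    have := orderOf_dvd_iff_zpow_eq_one.mpr hk
    rwa [hord'] at this
  have hzGdvdN : ∀ k : ℕ, zG ^ k = 1 → n ∣ k := by
    intro k hk
    have := orderOf_dvd_of_pow_eq_one hk
    rwa [hord] at this
  -- addOrderOf divides n
  have hordm : ∀ m : M, addOrderOf m ∣ n := by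
    intro m
    refine dvd_trans (addOrderOf_dvd_of_nsmul_eq_zero ?_) hdn
    rw [← Nat.cast_smul_eq_nsmul (ZMod d), ZMod.natCast_self, zero_smul]
  -- the fibered product subgroup
  let H : Subgroup (G × G') :=
    { carrier := {p | τ p.1 = τ' p.2}
      one_mem' := by simp
      mul_mem' := by
        intro p q hp hq
        simp only [Set.mem_setOf_eq] at *
        rw [Prod.fst_mul, Prod.snd_mul, map_mul, map_mul, hp, hq]
      inv_mem' := by
        intro p hp
        simp only [Set.mem_setOf_eq] at *
        rw [Prod.fst_inv, Prod.snd_inv, map_inv, map_inv, hp] }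
  have memH' : ∀ (g : G) (g' : G'), τ g = τ' g' → (g, g') ∈ H := fun g g' h => h
  have hmemH : ∀ p : H, τ p.1.1 = τ' p.1.2 := fun p => p.2
  let zH : H := ⟨(zG, zG'), memH' _ _ (by rw [hτzG, hτ'zG'])⟩
  let cH : H := ⟨(zG, (1 : G')), memH' _ _ (by rw [hτzG, map_one])⟩
  -- component projections
  let F1 : H →* G := (MonoidHom.fst G G').comp H.subtype
  let F2 : H →* G' := (MonoidHom.snd G G').comp H.subtype
  have Hext : ∀ p q : H, F1 p = F1 q → F2 p = F2 q → p = q := by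
    intro p q h1 h2
    exact Subtype.ext (Prod.ext h1 h2)
  -- zH is central
  have hzzH : ∀ p : H, zH * p = p * zH := by
    intro p
    exact Subtype.ext (Prod.ext (hzGc p.1.1) (hzG'c p.1.2))
  haveI hDn : (Subgroup.zpowers zH).Normal := by
    constructor
    intro x hx g
    obtain ⟨k, hk⟩ := Subgroup.mem_zpowers_iff.mp hx
    have cm : Commute (zH ^ k) g := Commute.zpow_left (hzzH g) k
    have : g * x * g⁻¹ = x := by
      rw [← hk, ← cm.eq, mul_assoc, mul_inv_cancel, mul_one]
    rw [this]
    exact hx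
  -- the quotient group
  let E := H ⧸ Subgroup.zpowers zH
  let mk : H →* E := QuotientGroup.mk' (Subgroup.zpowers zH)
  have hmksurj : Function.Surjective mk := QuotientGroup.mk'_surjective _
  have hmk_zH : mk zH = 1 := (QuotientGroup.eq_one_iff zH).mpr (Subgroup.mem_zpowers zH)
  -- commutator relation in H
  have hpqc : ∀ p q : H, p * q =
      zH ^ (2 * (φ (Multiplicative.toAdd (τ p.1.1)) (Multiplicative.toAdd (τ q.1.1))).val)
        * (q * p) := by
    intro p q
    apply Hext
    · rw [map_mul, map_mul, map_pow]
      exact hcomm p.1.1 q.1.1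
    · rw [map_mul, map_mul, map_pow]
      have h := hcomm' p.1.2 q.1.2
      rw [← hmemH p, ← hmemH q] at h
      exact h
  have hEcomm : ∀ a b : E, a * b = b * a := by
    intro a b
    obtain ⟨p, rfl⟩ := hmksurj a
    obtain ⟨q, rfl⟩ := hmksurj b
    rw [← map_mul, ← map_mul, hpqc p q, map_mul, map_pow, hmk_zH, one_pow, one_mul]
  letI instE : CommGroup E := { (inferInstance : Group E) with mul_comm := hEcomm }
  -- exponent of H divides n
  have hexpH : ∀ p : H, p ^ n = 1 := by
    intro p
    set m : M := Multiplicative.toAdd (τ p.1.1) with hm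
    obtain ⟨a, ha, hoa⟩ := hlift m
    obtain ⟨b, hb, hob⟩ := hlift' m
    have hτp1 : τ p.1.1 = Multiplicative.ofAdd m := (ofAdd_toAdd _).symm
    have hτ'p2 : τ' p.1.2 = Multiplicative.ofAdd m := by rw [← hmemH p, hτp1]
    have h1 : τ (a⁻¹ * p.1.1) = 1 := by
      rw [map_mul, map_inv, ha, hτp1, inv_mul_cancel]
    have h2 : τ' (b⁻¹ * p.1.2) = 1 := by
      rw [map_mul, map_inv, hb, hτ'p2, inv_mul_cancel]
    obtain ⟨j, hj⟩ := hkerG _ h1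
    obtain ⟨l, hl⟩ := hkerG' _ h2
    have hp1 : p.1.1 = a * zG ^ j := by rw [hj, mul_inv_cancel_left]
    have hp2 : p.1.2 = b * zG' ^ l := by rw [hl, mul_inv_cancel_left]
    have han : a ^ n = 1 := by
      apply orderOf_dvd_iff_pow_eq_one.mp
      rw [hoa]
      exact hordm m
    have hbn : b ^ n = 1 := by
      apply orderOf_dvd_iff_pow_eq_one.mp
      rw [hob]
      exact hordm m
    have hp1n : p.1.1 ^ n = 1 := by
      have cm : Commute a (zG ^ j) := ((show Commute zG a from hzGc a).symm).zpow_right j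
      rw [hp1, cm.mul_pow, han, one_mul, ← zpow_natCast (zG ^ j) n, ← zpow_mul]
      exact hzGpow _ ⟨j, by ring⟩
    have hp2n : p.1.2 ^ n = 1 := by
      have cm : Commute b (zG' ^ l) := ((show Commute zG' b from hzG'c b).symm).zpow_right l
      rw [hp2, cm.mul_pow, hbn, one_mul, ← zpow_natCast (zG' ^ l) n, ← zpow_mul]
      exact hzG'pow _ ⟨l, by ring⟩
    apply Hext
    · rw [map_pow, map_one]
      exact hp1n
    · rw [map_pow, map_one]
      exact hp2n
  have hexpE : ∀ e : E, e ^ n = 1 := by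
    intro e
    obtain ⟨p, rfl⟩ := hmksurj e
    rw [← map_pow, hexpH, map_one]
  -- the canonical central element of E
  let c : E := mk cH
  have hc_ord : orderOf c = n := by
    have h1 : orderOf c ∣ n := orderOf_dvd_of_pow_eq_one (hexpE c)
    have h2 : n ∣ orderOf c := by
      have h3 : mk (cH ^ orderOf c) = 1 := by
        rw [map_pow]
        exact pow_orderOf_eq_one c
      have h4 : cH ^ orderOf c ∈ Subgroup.zpowers zH := (QuotientGroup.eq_one_iff _).mp h3
      obtain ⟨k, hk⟩ := Subgroup.mem_zpowers_iff.mp h4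
      have h5 : zG' ^ k = 1 := by
        have h := congrArg F2 hk
        rw [map_zpow, map_pow] at h
        have h' : zG' ^ k = (1 : G') ^ orderOf c := h
        rwa [one_pow] at h'
      have h6 : (n:ℤ) ∣ k := hzG'dvd k h5
      have h7 : zG ^ k = 1 := hzGpow k h6
      have h8 : zG ^ (orderOf c) = 1 := by
        have := congrArg F1 hk
        rw [map_zpow, map_pow] at this
        have hF1z : F1 zH = zG := rfl
        have hF1c : F1 cH = zG := rfl
        rw [hF1z, hF1c] at this
        rw [← this, h7]
      exact hzGdvdN _ h8
    exact Nat.dvd_antisymm h1 h2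
  -- the retraction
  obtain ⟨r, hrc⟩ := exists_retraction n hexpE c hc_ord
  let ρ : E → ZMod n := fun e => Multiplicative.toAdd (r e)
  have hρmul : ∀ a b : E, ρ (a * b) = ρ a + ρ b := by
    intro a b
    show Multiplicative.toAdd (r (a * b)) = _
    rw [map_mul]
    rfl
  have hρ1 : ρ 1 = 0 := by
    show Multiplicative.toAdd (r 1) = 0
    rw [map_one]
    rfl
  have hρc : ∀ k : ℤ, ρ (c ^ k) = (k : ZMod n) := by
    intro k
    show Multiplicative.toAdd (r (c ^ k)) = _
    rw [map_zpow, toAdd_zpow, hrc]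
    rw [zsmul_eq_mul, mul_one]
  -- auxiliary pieces
  have hone : ∀ k : ℤ, τ (1 : G) = τ' (zG' ^ k) := by
    intro k
    rw [map_one, map_zpow, hτ'zG', one_zpow]
  have hmk_one : ∀ k : ℤ, mk ⟨((1:G), zG' ^ k), memH' _ _ (hone k)⟩ = c ^ (-k) := by
    intro k
    have hdec : (⟨((1:G), zG' ^ k), memH' _ _ (hone k)⟩ : H) = cH ^ (-k) * zH ^ k := by
      apply Hext
      · rw [map_mul, map_zpow, map_zpow]
        show (1:G) = zG ^ (-k) * zG ^ k
        rw [zpow_neg, inv_mul_cancel]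
      · rw [map_mul, map_zpow, map_zpow]
        show zG' ^ k = (1:G') ^ (-k) * zG' ^ k
        rw [one_zpow, one_mul]
    rw [hdec, map_mul, map_zpow, map_zpow, hmk_zH, one_zpow, mul_one]
  -- the matching predicate
  let P : G → G' → Prop := fun g g' =>
    ∃ h : τ g = τ' g', ρ (mk ⟨(g, g'), memH' _ _ h⟩) = 0
  have hPexists : ∀ g : G, ∃ g', P g g' := by
    intro g
    obtain ⟨g0, hg0⟩ := hsurj' (τ g)
    set t : ZMod n := ρ (mk ⟨(g, g0), memH' _ _ hg0.symm⟩) with ht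
    have hmem : τ g = τ' (g0 * zG' ^ (t.val : ℤ)) := by
      rw [map_mul, map_zpow, hτ'zG', one_zpow, mul_one, hg0]
    refine ⟨g0 * zG' ^ (t.val : ℤ), hmem, ?_⟩
    have hdec : (⟨(g, g0 * zG' ^ (t.val : ℤ)), memH' _ _ hmem⟩ : H)
        = ⟨(g, g0), memH' _ _ hg0.symm⟩ * ⟨((1:G), zG' ^ (t.val : ℤ)), memH' _ _ (hone _)⟩ := by
      apply Hext
      · rw [map_mul]
        show g = g * 1
        rw [mul_one]
      · rw [map_mul]
        rfl
    rw [hdec, map_mul, hρmul, ← ht, hmk_one, hρc]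
    push_cast
    rw [ZMod.natCast_rightInverse t]
    ring
  have hPunique : ∀ g g₁ g₂, P g g₁ → P g g₂ → g₁ = g₂ := by
    rintro g g₁ g₂ ⟨h1, e1⟩ ⟨h2, e2⟩
    have hker12 : τ' (g₁⁻¹ * g₂) = 1 := by
      rw [map_mul, map_inv, ← h1, ← h2, inv_mul_cancel]
    obtain ⟨k, hk⟩ := hkerG' _ hker12
    have hg2 : g₂ = g₁ * zG' ^ k := by rw [hk, mul_inv_cancel_left]
    have hdec : (⟨(g, g₂), memH' _ _ h2⟩ : H)
        = ⟨(g, g₁), memH' _ _ h1⟩ * ⟨((1:G), zG' ^ k), memH' _ _ (hone k)⟩ := by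
      apply Hext
      · rw [map_mul]
        show g = g * 1
        rw [mul_one]
      · rw [map_mul]
        exact hg2
    have hval : ρ (mk ⟨(g, g₂), memH' _ _ h2⟩)
        = ρ (mk ⟨(g, g₁), memH' _ _ h1⟩) + ((-k : ℤ) : ZMod n) := by
      rw [hdec, map_mul, hρmul, hmk_one, hρc]
    rw [e1, e2, zero_add] at hval
    have hk0 : ((k : ℤ) : ZMod n) = 0 := by
      push_cast at hval
      exact neg_eq_zero.mp hval.symm
    have hdvd : (n:ℤ) ∣ k := (ZMod.intCast_zmod_eq_zero_iff_dvd k n).mp hk0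
    rw [hg2, hzG'pow k hdvd, mul_one]
  have hPmul : ∀ g h a b, P g a → P h b → P (g * h) (a * b) := by
    rintro g h a b ⟨h1, e1⟩ ⟨h2, e2⟩
    have hm : τ (g * h) = τ' (a * b) := by rw [map_mul, map_mul, h1, h2]
    refine ⟨hm, ?_⟩
    have hdec : (⟨(g * h, a * b), memH' _ _ hm⟩ : H)
        = ⟨(g, a), memH' _ _ h1⟩ * ⟨(h, b), memH' _ _ h2⟩ := Subtype.ext rfl
    rw [hdec, map_mul, hρmul, e1, e2, add_zero]
  have hPz : ∀ g a (k : ℤ), P g a → P (g * zG ^ k) (a * zG' ^ k) := by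
    rintro g a k ⟨h1, e1⟩
    have hm : τ (g * zG ^ k) = τ' (a * zG' ^ k) := by
      rw [map_mul, map_mul, map_zpow, map_zpow, hτzG, hτ'zG', h1]
    refine ⟨hm, ?_⟩
    have hdec : (⟨(g * zG ^ k, a * zG' ^ k), memH' _ _ hm⟩ : H)
        = ⟨(g, a), memH' _ _ h1⟩ * zH ^ k := by
      apply Hext
      · rw [map_mul, map_zpow]
        rfl
      · rw [map_mul, map_zpow]
        rfl
    rw [hdec, map_mul, hρmul, e1, map_zpow, hmk_zH, one_zpow, hρ1, add_zero]
  choose ι₀ hι₀ using hPexists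
  have hτι : ∀ g, τ' (ι₀ g) = τ g := by
    intro g
    obtain ⟨h, -⟩ := hι₀ g
    exact h.symm
  have hP11 : P 1 1 := by
    refine ⟨by rw [map_one, map_one], ?_⟩
    have : (⟨((1:G), (1:G')), memH' _ _ (by rw [map_one, map_one])⟩ : H) = 1 :=
      Subtype.ext rfl
    rw [this, map_one, hρ1]
  have ιone : ι₀ 1 = 1 := hPunique 1 _ _ (hι₀ 1) hP11
  have ιmul : ∀ g h, ι₀ (g * h) = ι₀ g * ι₀ h := fun g h =>
    hPunique (g * h) _ _ (hι₀ (g * h)) (hPmul _ _ _ _ (hι₀ g) (hι₀ h))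
  have ιz : ∀ g (k : ℤ), ι₀ (g * zG ^ k) = ι₀ g * zG' ^ k := fun g k =>
    hPunique (g * zG ^ k) _ _ (hι₀ _) (hPz g (ι₀ g) k (hι₀ g))
  let ιhom : G →* G' := { toFun := ι₀, map_one' := ιone, map_mul' := ιmul }
  have hinjι : Function.Injective ι₀ := by
    intro g h hgh
    have hkgh : τ (h⁻¹ * g) = 1 := by
      rw [map_mul, map_inv, ← hτι g, ← hτι h, hgh, inv_mul_cancel]
    obtain ⟨k, hk⟩ := hkerG _ hkgh
    have hg : g = h * zG ^ k := by rw [hk, mul_inv_cancel_left]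
    have h1 : ι₀ g = ι₀ h * zG' ^ k := by rw [hg, ιz]
    rw [hgh] at h1
    have h2 : zG' ^ k = 1 := (left_eq_mul.mp h1)
    have h3 : (n:ℤ) ∣ k := hzG'dvd k h2
    rw [hg, hzGpow k h3, mul_one]
  have hsurjι : Function.Surjective ι₀ := by
    intro y
    obtain ⟨g, hg⟩ := hsurj (τ' y)
    have hky : τ' ((ι₀ g)⁻¹ * y) = 1 := by
      rw [map_mul, map_inv, hτι, hg, inv_mul_cancel]
    obtain ⟨k, hk⟩ := hkerG' _ hky
    have hy : y = ι₀ g * zG' ^ k := by rw [hk, mul_inv_cancel_left]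
    exact ⟨g * zG ^ k, by rw [ιz, ← hy]⟩
  refine ⟨MulEquiv.ofBijective ιhom ⟨hinjι, hsurjι⟩, fun g => hτι g⟩
end

section
/- Let H ⊆ P_n be a commutative subgroup containing no nontrivial scalars. Then dim_ℂ V^H = (dim_ℂ V) / #H = d^n / #H. -/
noncomputable section

namespace QuditPauli

/-- `d̄`: equals `d` if `d` is odd and `2d` if `d` is even. -/
def dbar (d : ℕ) : ℕ := if d % 2 = 1 then d else 2 * d

/-- The Hilbert space of `n` qudits of dimension `d`, modelled as the space of
complex functions on `(ℤ_d)^n`; the standard basis vectors `δ_w` realize the basis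
`v_{i₁} ⊗ … ⊗ v_{i_n}` of `(ℂ^d)^{⊗n}`. -/
abbrev QV (d n : ℕ) : Type := (Fin n → ZMod d) → ℂ

variable {d n : ℕ}

/-- The invertible diagonal operator multiplying the `w`-th coordinate by `c w`. -/
def diagOp (c : (Fin n → ZMod d) → ℂ) (hc : ∀ w, c w ≠ 0) : QV d n ≃ₗ[ℂ] QV d n where
  toFun f := fun w => c w * f w
  invFun f := fun w => (c w)⁻¹ * f w
  map_add' f g := by funext w; simp [mul_add]
  map_smul' a f := by funext w; simp only [Pi.smul_apply, smul_eq_mul, RingHom.id_apply]; ring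
  left_inv f := by
    funext w
    field_simp
    rw [mul_comm, mul_div_assoc, div_self (hc w), mul_one]
  right_inv f := by
    funext w
    field_simp
    rw [mul_comm, mul_div_assoc, div_self (hc w), mul_one]

/-- The permutation of `(ℤ_d)^n` subtracting `1` from the `r`-th coordinate. -/
def shiftEquiv (d n : ℕ) (r : Fin n) : (Fin n → ZMod d) ≃ (Fin n → ZMod d) where
  toFun w := Function.update w r (w r - 1)
  invFun w := Function.update w r (w r + 1)
  left_inv w := by
    funext i
    rcases eq_or_ne i r with rfl | h
    · simp
    · simp [Function.update_of_ne h]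
  right_inv w := by
    funext i
    rcases eq_or_ne i r with rfl | h
    · simp
    · simp [Function.update_of_ne h]

/-- The qudit Pauli operator `X` on the `r`-th factor: on basis vectors,
`X_r (v_{i₁} ⊗ … ⊗ v_{i_r} ⊗ … ) = v_{i₁} ⊗ … ⊗ v_{i_r + 1} ⊗ …`. -/
def Xop (d n : ℕ) (r : Fin n) : QV d n ≃ₗ[ℂ] QV d n :=
  LinearEquiv.funCongrLeft ℂ ℂ (shiftEquiv d n r)

/-- The qudit Pauli operator `Z` (with parameter `ξ`) on the `r`-th factor: on basis
vectors, `Z_r (v_{i₁} ⊗ … ⊗ v_{i_r} ⊗ …) = ξ^{i_r} · (v_{i₁} ⊗ … ⊗ v_{i_r} ⊗ …)`. -/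
def Zop (d n : ℕ) (r : Fin n) (ξ : ℂ) (hξ : ξ ≠ 0) : QV d n ≃ₗ[ℂ] QV d n :=
  diagOp (fun w => ξ ^ (w r).val) (fun _ => pow_ne_zero _ hξ)

/-- The scalar operator `c · id`. -/
def scalarOp (d n : ℕ) (c : ℂ) (hc : c ≠ 0) : QV d n ≃ₗ[ℂ] QV d n :=
  diagOp (fun _ => c) (fun _ => hc)

/-- The `n`-qudit Pauli group `P_n = P_n^{(d)}`: the subgroup of `GL((ℂ^d)^{⊗n})`
generated by `X₁,…,X_n`, `Z₁,…,Z_n` (with `ξ = ζ²`) and the scalar operator `ζ·id`. -/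
def pauliGroup (d n : ℕ) (ζ : ℂ) (hζ : ζ ≠ 0) : Subgroup (QV d n ≃ₗ[ℂ] QV d n) :=
  Subgroup.closure
    ({scalarOp d n ζ hζ} ∪ Set.range (fun r => Xop d n r) ∪
      Set.range (fun r => Zop d n r (ζ ^ 2) (pow_ne_zero 2 hζ)))

lemma scalarOp_mem (d n : ℕ) (ζ : ℂ) (hζ : ζ ≠ 0) :
    scalarOp d n ζ hζ ∈ pauliGroup d n ζ hζ :=
  Subgroup.subset_closure (by simp)

lemma Xop_mem (d n : ℕ) (ζ : ℂ) (hζ : ζ ≠ 0) (r : Fin n) :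
    Xop d n r ∈ pauliGroup d n ζ hζ :=
  Subgroup.subset_closure (by simp)

lemma Zop_mem (d n : ℕ) (ζ : ℂ) (hζ : ζ ≠ 0) (r : Fin n) :
    Zop d n r (ζ ^ 2) (pow_ne_zero 2 hζ) ∈ pauliGroup d n ζ hζ :=
  Subgroup.subset_closure (by simp)

/-- The scalar operator `ζ·id` as an element of the Pauli group. -/
def sP (d n : ℕ) (ζ : ℂ) (hζ : ζ ≠ 0) : (pauliGroup d n ζ hζ) :=
  ⟨scalarOp d n ζ hζ, scalarOp_mem d n ζ hζ⟩

/-- `X_r` as an element of the Pauli group. -/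
def xP (d n : ℕ) (ζ : ℂ) (hζ : ζ ≠ 0) (r : Fin n) : (pauliGroup d n ζ hζ) :=
  ⟨Xop d n r, Xop_mem d n ζ hζ r⟩

/-- `Z_r` as an element of the Pauli group. -/
def zP (d n : ℕ) (ζ : ℂ) (hζ : ζ ≠ 0) (r : Fin n) : (pauliGroup d n ζ hζ) :=
  ⟨Zop d n r (ζ ^ 2) (pow_ne_zero 2 hζ), Zop_mem d n ζ hζ r⟩

/-- A linear automorphism of `(ℂ^d)^{⊗n}` is unitary if it preserves the standard
Hermitian inner product `⟪f, g⟫ = ∑_w conj (f w) * g w`. -/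
def IsUnitaryOp (d n : ℕ) [NeZero d] (U : QV d n ≃ₗ[ℂ] QV d n) : Prop :=
  ∀ f g : QV d n,
    ∑ w : Fin n → ZMod d, (starRingEnd ℂ) (U f w) * (U g w)
      = ∑ w : Fin n → ZMod d, (starRingEnd ℂ) (f w) * g w

/-- The protected space `V^H = {v ∈ V : h(v) = v for all h ∈ H}` of a subgroup `H` of
the Pauli group. -/
def fixedSpace {d n : ℕ} {ζ : ℂ} {hζ : ζ ≠ 0} (H : Subgroup (pauliGroup d n ζ hζ)) :
    Submodule ℂ (QV d n) where
  carrier := {v | ∀ g ∈ H, ((g : QV d n ≃ₗ[ℂ] QV d n) : QV d n ≃ₗ[ℂ] QV d n) v = v}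
  add_mem' := by
    intro a b ha hb g hg
    rw [map_add, ha g hg, hb g hg]
  zero_mem' := by
    intro g hg
    exact map_zero _
  smul_mem' := by
    intro c v hv g hg
    rw [map_smul, hv g hg]

end QuditPauli
namespace QuditPauli

open Finset Polynomial

set_option linter.unusedSectionVars false

variable {d n : ℕ} [NeZero d] {ζ : ℂ}

lemma dbar_pos (d : ℕ) [NeZero d] : 0 < dbar d := by
  have := Nat.pos_of_ne_zero (NeZero.ne d)
  unfold dbar; split <;> omega

lemma xi_pow_d (h1 : ζ ^ dbar d = 1) : (ζ ^ 2) ^ d = 1 := by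
  rw [← pow_mul]
  unfold dbar at h1
  split at h1
  · rw [mul_comm, pow_mul, h1, one_pow]
  · exact h1

lemma xi_prim (hζ : IsPrimitiveRoot ζ (dbar d)) : IsPrimitiveRoot (ζ ^ 2) d := by
  unfold dbar at hζ
  split at hζ
  case isTrue h =>
    exact hζ.pow_of_coprime 2 (Nat.coprime_two_left.mpr (Nat.odd_iff.mpr h))
  case isFalse h =>
    exact hζ.pow (by have := Nat.pos_of_ne_zero (NeZero.ne d); omega) rfl

/-- The phase `ξ^x` for `x : ZMod d`, with `ξ = ζ²`. -/
def eph (ζ : ℂ) {d : ℕ} (x : ZMod d) : ℂ := (ζ ^ 2) ^ x.val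

lemma eph_natCast (hξ : (ζ ^ 2) ^ d = 1) (k : ℕ) : eph ζ ((k : ZMod d)) = (ζ ^ 2) ^ k := by
  rw [eph, ZMod.val_natCast]
  conv_rhs => rw [← Nat.div_add_mod k d]
  rw [pow_add, pow_mul, hξ, one_pow, one_mul]

lemma eph_add (hξ : (ζ ^ 2) ^ d = 1) (x y : ZMod d) :
    eph ζ (x + y) = eph ζ x * eph ζ y := by
  have h : x + y = ((x.val + y.val : ℕ) : ZMod d) := by
    push_cast [ZMod.natCast_val, ZMod.cast_id]
    rfl

  rw [h, eph_natCast hξ, pow_add]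
  rfl

lemma eph_zero : eph ζ (0 : ZMod d) = 1 := by
  simp [eph, ZMod.val_zero]

lemma eph_neg_mul (hξ : (ζ ^ 2) ^ d = 1) (x : ZMod d) : eph ζ (-x) * eph ζ x = 1 := by
  rw [← eph_add hξ, neg_add_cancel, eph_zero]

lemma eph_eq_zeta_pow (x : ZMod d) : eph ζ x = ζ ^ (2 * x.val) := by
  rw [eph, ← pow_mul]

lemma eph_mul_natCast (hξ : (ζ ^ 2) ^ d = 1) (c : ZMod d) (k : ℕ) :
    eph ζ (c * (k : ZMod d)) = (eph ζ c) ^ k := by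
  induction k with
  | zero => simp [eph_zero]
  | succ m ih =>
      push_cast
      rw [mul_add, mul_one, eph_add hξ, ih, pow_succ]

lemma eph_ne_one (hξ : IsPrimitiveRoot (ζ ^ 2) d) {c : ZMod d} (hc : c ≠ 0) :
    eph ζ c ≠ 1 := by
  rw [eph, Ne, hξ.pow_eq_one_iff_dvd]
  intro hdvd
  have hlt : c.val < d := ZMod.val_lt c
  have h0 : c.val = 0 := Nat.eq_zero_of_dvd_of_lt hdvd hlt
  exact hc ((ZMod.val_eq_zero c).mp h0)

lemma sum_eph_eq_zero (hξ : IsPrimitiveRoot (ζ ^ 2) d) {c : ZMod d} (hc : c ≠ 0) :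
    ∑ x : ZMod d, eph ζ (c * x) = 0 := by
  have hξ1 : (ζ ^ 2) ^ d = 1 := hξ.pow_eq_one
  have h1 : ∑ x : ZMod d, eph ζ (c * x) = ∑ k ∈ Finset.range d, (eph ζ c) ^ k := by
    refine Finset.sum_nbij' (fun x => x.val) (fun k => (k : ZMod d)) ?_ ?_ ?_ ?_ ?_
    · intro x _; exact Finset.mem_range.mpr (ZMod.val_lt x)
    · intro k _; exact Finset.mem_univ _
    · intro x _; simp [ZMod.natCast_val, ZMod.cast_id]
    · intro k hk; exact ZMod.val_natCast_of_lt (Finset.mem_range.mp hk)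
    · intro x _
      conv_lhs => rw [show x = ((x.val : ℕ) : ZMod d) by simp [ZMod.natCast_val, ZMod.cast_id]]
      rw [eph_mul_natCast hξ1]
  rw [h1, geom_sum_eq (eph_ne_one hξ hc)]
  have : (eph ζ c) ^ d = 1 := by
    rw [eph, ← pow_mul, mul_comm, pow_mul, hξ1, one_pow]
  rw [this, sub_self, zero_div]

end QuditPauli
namespace QuditPauli

open Finset

set_option linter.unusedSectionVars false

variable {d n : ℕ} [NeZero d] {ζ : ℂ}

/-- Normal form: `g f w = ζ^a · ∏_r ξ^{c_r w_r} · f (w - b)`. -/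
def NFset (d n : ℕ) (ζ : ℂ) : Set (QV d n ≃ₗ[ℂ] QV d n) :=
  {g | ∃ (a : ℕ) (b c : Fin n → ZMod d), ∀ (f : QV d n) (w : Fin n → ZMod d),
    g f w = ζ ^ a * (∏ r, eph ζ (c r * w r)) * f (w - b)}

lemma one_mem_NFset : (1 : QV d n ≃ₗ[ℂ] QV d n) ∈ NFset d n ζ := by
  refine ⟨0, 0, 0, fun f w => ?_⟩
  simp [eph_zero]

lemma mul_mem_NFset (h1 : ζ ^ dbar d = 1) {g₁ g₂ : QV d n ≃ₗ[ℂ] QV d n}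
    (hg₁ : g₁ ∈ NFset d n ζ) (hg₂ : g₂ ∈ NFset d n ζ) : g₁ * g₂ ∈ NFset d n ζ := by
  have hξ : (ζ ^ 2) ^ d = 1 := xi_pow_d h1
  obtain ⟨a₁, b₁, c₁, H₁⟩ := hg₁
  obtain ⟨a₂, b₂, c₂, H₂⟩ := hg₂
  refine ⟨a₁ + a₂ + 2 * ∑ r, (-(c₂ r * b₁ r)).val, b₁ + b₂, c₁ + c₂, fun f w => ?_⟩
  have : (g₁ * g₂) f w = g₁ (g₂ f) w := rfl
  rw [this, H₁, H₂]
  have key : ∀ r, eph ζ (c₂ r * (w - b₁) r) =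
      eph ζ (c₂ r * w r) * eph ζ (-(c₂ r * b₁ r)) := by
    intro r
    rw [← eph_add hξ]
    congr 1
    simp [Pi.sub_apply]
    ring
  rw [Finset.prod_congr rfl (fun r _ => key r), Finset.prod_mul_distrib]
  have hpow : ∏ r, eph ζ (-(c₂ r * b₁ r)) = ζ ^ (2 * ∑ r, (-(c₂ r * b₁ r)).val) := by
    rw [Finset.prod_congr rfl (fun r _ => eph_eq_zeta_pow (-(c₂ r * b₁ r))),
      Finset.prod_pow_eq_pow_sum, Finset.mul_sum]
  have hc12 : ∀ r, eph ζ ((c₁ + c₂) r * w r) = eph ζ (c₁ r * w r) * eph ζ (c₂ r * w r) := by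
    intro r
    rw [← eph_add hξ]
    congr 1
    simp [add_mul]
  rw [Finset.prod_congr rfl (fun r _ => hc12 r), Finset.prod_mul_distrib, hpow]
  have : w - b₁ - b₂ = w - (b₁ + b₂) := by rw [sub_sub]
  rw [this, pow_add, pow_add]
  ring

lemma inv_mem_NFset (h1 : ζ ^ dbar d = 1) {g : QV d n ≃ₗ[ℂ] QV d n}
    (hg : g ∈ NFset d n ζ) : g⁻¹ ∈ NFset d n ζ := by
  have hξ : (ζ ^ 2) ^ d = 1 := xi_pow_d h1
  obtain ⟨a, b, c, H⟩ := hg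
  refine ⟨(a + 2 * ∑ r, (c r * b r).val) * (dbar d - 1), -b, -c, fun f w => ?_⟩
  set a' := (a + 2 * ∑ r, (c r * b r).val) * (dbar d - 1) with ha'
  -- key : for any f', applying the candidate formula to (g f') at w gives f' w
  have key : ∀ (f' : QV d n),
      ζ ^ a' * (∏ r, eph ζ ((-c) r * w r)) * (g f') (w - -b) = f' w := by
    intro f'
    rw [H]
    have hw : w - -b - b = w := by abel
    rw [hw]
    have hsplit : ∀ r, eph ζ (c r * (w - -b) r) =
        eph ζ (c r * w r) * eph ζ (c r * b r) := by
      intro r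
      rw [← eph_add hξ]
      congr 1
      simp [Pi.sub_apply]
      ring
    rw [Finset.prod_congr rfl (fun r _ => hsplit r), Finset.prod_mul_distrib]
    have hneg : ∀ r, eph ζ ((-c) r * w r) = eph ζ (-(c r * w r)) := by
      intro r; congr 1; simp
    rw [Finset.prod_congr rfl (fun r _ => hneg r)]
    have hcancel : (∏ r, eph ζ (-(c r * w r))) * (∏ r, eph ζ (c r * w r)) = 1 := by
      rw [← Finset.prod_mul_distrib]
      exact Finset.prod_eq_one (fun r _ => eph_neg_mul hξ _)
    have hcb : ∏ r, eph ζ (c r * b r) = ζ ^ (2 * ∑ r, (c r * b r).val) := by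
      rw [Finset.prod_congr rfl (fun r _ => eph_eq_zeta_pow _),
        Finset.prod_pow_eq_pow_sum, Finset.mul_sum]
    have hζpow : ζ ^ a' * ζ ^ a * ζ ^ (2 * ∑ r, (c r * b r).val) = 1 := by
      rw [← pow_add, ← pow_add, ha']
      have hd : 0 < dbar d := dbar_pos d
      have : (a + 2 * ∑ r, (c r * b r).val) * (dbar d - 1) + a
          + 2 * ∑ r, (c r * b r).val = (a + 2 * ∑ r, (c r * b r).val) * dbar d := by
        obtain ⟨k, hk⟩ : ∃ k, dbar d = k + 1 := ⟨dbar d - 1, by omega⟩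
        rw [hk]
        simp [Nat.mul_succ]
        ring
      rw [this, pow_mul', h1, one_pow]
    calc ζ ^ a' * (∏ r, eph ζ (-(c r * w r))) *
          (ζ ^ a * ((∏ r, eph ζ (c r * w r)) * ∏ r, eph ζ (c r * b r)) * f' w)
        = (ζ ^ a' * ζ ^ a * ∏ r, eph ζ (c r * b r)) *
          ((∏ r, eph ζ (-(c r * w r))) * (∏ r, eph ζ (c r * w r))) * f' w := by ring
      _ = f' w := by rw [hcancel, hcb, hζpow]; ring
  have := key (g⁻¹ f)
  have happ : g ((g⁻¹ : QV d n ≃ₗ[ℂ] QV d n) f) = f := by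
    exact g.apply_symm_apply f
  rw [happ] at this
  exact this.symm

/-- The normal-form subgroup. -/
def NFgroup (d n : ℕ) [NeZero d] (ζ : ℂ) (h1 : ζ ^ dbar d = 1) :
    Subgroup (QV d n ≃ₗ[ℂ] QV d n) where
  carrier := NFset d n ζ
  one_mem' := one_mem_NFset
  mul_mem' := mul_mem_NFset h1
  inv_mem' := inv_mem_NFset h1

end QuditPauli
namespace QuditPauli

open Finset

set_option linter.unusedSectionVars false

variable {d n : ℕ} [NeZero d] {ζ : ℂ}

lemma scalarOp_apply (hζ0 : ζ ≠ 0) (f : QV d n) (w : Fin n → ZMod d) :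
    scalarOp d n ζ hζ0 f w = ζ * f w := rfl

lemma Xop_apply (r : Fin n) (f : QV d n) (w : Fin n → ZMod d) :
    Xop d n r f w = f (w - Pi.single r 1) := by
  have : Xop d n r f w = f (Function.update w r (w r - 1)) := rfl
  rw [this]
  congr 1
  funext i
  rcases eq_or_ne i r with rfl | hir
  · simp
  · simp [Function.update_of_ne hir, Pi.single_eq_of_ne hir]

lemma Zop_apply (r : Fin n) (ξ : ℂ) (hξ : ξ ≠ 0) (f : QV d n) (w : Fin n → ZMod d) :
    Zop d n r ξ hξ f w = ξ ^ (w r).val * f w := rfl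

lemma scalarOp_mem_NFset (hζ0 : ζ ≠ 0) : scalarOp d n ζ hζ0 ∈ NFset d n ζ := by
  refine ⟨1, 0, 0, fun f w => ?_⟩
  rw [scalarOp_apply]
  simp [eph_zero]

lemma Xop_mem_NFset (r : Fin n) : Xop d n r ∈ NFset d n ζ := by
  refine ⟨0, Pi.single r 1, 0, fun f w => ?_⟩
  rw [Xop_apply]
  simp [eph_zero]

lemma Zop_mem_NFset (hζ0 : ζ ≠ 0) (r : Fin n) :
    Zop d n r (ζ ^ 2) (pow_ne_zero 2 hζ0) ∈ NFset d n ζ := by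
  refine ⟨0, 0, Pi.single r 1, fun f w => ?_⟩
  rw [Zop_apply]
  have : ∏ s, eph ζ (Pi.single r (1 : ZMod d) s * w s) = eph ζ (w r) := by
    rw [Finset.prod_eq_single r]
    · simp
    · intro s _ hs
      simp [Pi.single_eq_of_ne hs, eph_zero]
    · intro h
      exact absurd (Finset.mem_univ r) h
  rw [this]
  simp [eph]

lemma pauliGroup_le_NFgroup (hζ0 : ζ ≠ 0) (h1 : ζ ^ dbar d = 1) :
    pauliGroup d n ζ hζ0 ≤ NFgroup d n ζ h1 := by
  rw [pauliGroup, Subgroup.closure_le]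
  rintro g ((rfl | ⟨r, rfl⟩) | ⟨r, rfl⟩)
  · exact scalarOp_mem_NFset hζ0
  · exact Xop_mem_NFset r
  · exact Zop_mem_NFset hζ0 r

end QuditPauli
namespace QuditPauli

open Finset

set_option linter.unusedSectionVars false
set_option maxHeartbeats 800000

variable {d n : ℕ} [NeZero d] {ζ : ℂ}

lemma trace_formula (g : QV d n →ₗ[ℂ] QV d n) :
    LinearMap.trace ℂ (QV d n) g = ∑ w : Fin n → ZMod d, g (Pi.single w 1) w := by
  classical
  rw [LinearMap.trace_eq_matrix_trace ℂ (Pi.basisFun ℂ (Fin n → ZMod d)) g, Matrix.trace]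
  refine Finset.sum_congr rfl fun w _ => ?_
  rw [Matrix.diag_apply, LinearMap.toMatrix_apply, Pi.basisFun_apply, Pi.basisFun_repr]

lemma trace_of_NF {g : QV d n ≃ₗ[ℂ] QV d n} (hξ : IsPrimitiveRoot (ζ ^ 2) d)
    (a : ℕ) (b c : Fin n → ZMod d)
    (H : ∀ (f : QV d n) (w : Fin n → ZMod d),
      g f w = ζ ^ a * (∏ r, eph ζ (c r * w r)) * f (w - b))
    (hnd : b ≠ 0 ∨ c ≠ 0) :
    LinearMap.trace ℂ (QV d n) (g : QV d n →ₗ[ℂ] QV d n) = 0 := by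
  classical
  have hform : ∀ w : Fin n → ZMod d,
      (g : QV d n →ₗ[ℂ] QV d n) (Pi.single w 1) w
        = ζ ^ a * (∏ r, eph ζ (c r * w r)) * ((Pi.single w (1:ℂ) : QV d n)) (w - b) := by
    intro w
    rw [LinearEquiv.coe_coe]
    exact H _ w
  rw [trace_formula, Finset.sum_congr rfl fun w _ => hform w]
  rcases eq_or_ne b 0 with rfl | hb
  · -- b = 0, so c ≠ 0
    have hc : c ≠ 0 := hnd.resolve_left (fun h => h rfl)
    obtain ⟨r₀, hr₀⟩ : ∃ r₀, c r₀ ≠ 0 := by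
      by_contra h
      push_neg at h
      exact hc (funext h)
    have : ∀ w : Fin n → ZMod d, ((Pi.single w (1:ℂ) : QV d n)) (w - 0) = 1 := by
      intro w; rw [sub_zero, Pi.single_eq_same]
    rw [Finset.sum_congr rfl fun w _ => by rw [this w, mul_one]]
    rw [← Finset.mul_sum]
    have hsum : ∑ w : Fin n → ZMod d, ∏ r, eph ζ (c r * w r)
        = ∏ r, ∑ x : ZMod d, eph ζ (c r * x) := by
      rw [Finset.prod_univ_sum]
      rw [Fintype.piFinset_univ]
    rw [hsum, Finset.prod_eq_zero (Finset.mem_univ r₀) (sum_eph_eq_zero hξ hr₀), mul_zero]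
  · -- b ≠ 0 : every diagonal entry vanishes
    refine Finset.sum_eq_zero fun w _ => ?_
    have : ((Pi.single w (1:ℂ) : QV d n)) (w - b) = 0 := by
      apply Pi.single_eq_of_ne
      rw [Ne, sub_eq_self]
      exact hb
    rw [this, mul_zero]

end QuditPauli
namespace QuditPauli

open Finset

set_option linter.unusedSectionVars false
set_option maxHeartbeats 800000

variable {d n : ℕ} [NeZero d] {ζ : ℂ}

lemma scalarOp_pow_apply (hζ0 : ζ ≠ 0) (a : ℕ) (f : QV d n) (w : Fin n → ZMod d) :
    ((scalarOp d n ζ hζ0) ^ a) f w = ζ ^ a * f w := by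
  induction a generalizing f with
  | zero => simp
  | succ m ih =>
      have h1 : ((scalarOp d n ζ hζ0) ^ (m + 1)) f w
          = ((scalarOp d n ζ hζ0) ^ m) (scalarOp d n ζ hζ0 f) w := by
        rw [pow_succ]
        rfl
      rw [h1, ih, scalarOp_apply, pow_succ]
      ring

lemma eq_sP_pow_of_scalar (hζ0 : ζ ≠ 0) (g : pauliGroup d n ζ hζ0) (a : ℕ)
    (H : ∀ (f : QV d n) (w : Fin n → ZMod d),
      (g : QV d n ≃ₗ[ℂ] QV d n) f w = ζ ^ a * f w) :
    g = (sP d n ζ hζ0) ^ (a : ℤ) := by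
  rw [zpow_natCast]
  apply Subtype.ext
  rw [SubmonoidClass.coe_pow]
  apply LinearEquiv.toLinearMap_injective
  apply LinearMap.ext
  intro f
  funext w
  have h2 : ((sP d n ζ hζ0 : pauliGroup d n ζ hζ0) : QV d n ≃ₗ[ℂ] QV d n)
      = scalarOp d n ζ hζ0 := rfl
  simp only [LinearEquiv.coe_coe]
  rw [H f w, h2, scalarOp_pow_apply]

lemma NF_entry (h1 : ζ ^ dbar d = 1) {g : QV d n ≃ₗ[ℂ] QV d n} (hg : g ∈ NFset d n ζ)
    (v w : Fin n → ZMod d) :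
    g (Pi.single v 1) w = 0 ∨ (g (Pi.single v 1) w) ^ (dbar d) = 1 := by
  classical
  obtain ⟨a, b, c, H⟩ := hg
  rw [H]
  rcases eq_or_ne (w - b) v with hv | hv
  · right
    rw [hv, Pi.single_eq_same, mul_one]
    have : ζ ^ a * (∏ r, eph ζ (c r * w r)) = ζ ^ (a + 2 * ∑ r, (c r * w r).val) := by
      rw [Finset.prod_congr rfl (fun r _ => eph_eq_zeta_pow _),
        Finset.prod_pow_eq_pow_sum, Finset.mul_sum, pow_add]
    rw [this, ← pow_mul, mul_comm, pow_mul, h1, one_pow]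
  · left
    rw [Pi.single_eq_of_ne hv, mul_zero]

end QuditPauli

namespace QuditPauli

set_option maxHeartbeats 1600000

/-- Let `H ⊆ P_n` be a commutative subgroup containing no
nontrivial scalars.  Then `dim_ℂ V^H = (dim_ℂ V) / #H = d^n / #H`, stated here in the
equivalent (division-free) form `dim_ℂ V^H · #H = dim_ℂ V = d^n`. -/
theorem finrank_fixedSpace_mul_card
    (d n : ℕ) [NeZero d] (ζ : ℂ) (hζ0 : ζ ≠ 0) (hζ : IsPrimitiveRoot ζ (dbar d))
    (H : Subgroup (pauliGroup d n ζ hζ0))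
    (hcomm : ∀ a ∈ H, ∀ b ∈ H, a * b = b * a)
    (hscal : ∀ g ∈ H, (∃ a : ℤ, g = (sP d n ζ hζ0) ^ a) → g = 1) :
    Module.finrank ℂ (fixedSpace H) * Nat.card H = Module.finrank ℂ (QV d n) ∧
    Module.finrank ℂ (QV d n) = d ^ n := by
  classical
  have h1 : ζ ^ dbar d = 1 := hζ.pow_eq_one
  have hξp : IsPrimitiveRoot (ζ ^ 2) d := xi_prim hζ
  have hdim : Module.finrank ℂ (QV d n) = d ^ n := by
    rw [Module.finrank_fintype_fun_eq_card, Fintype.card_fun, ZMod.card, Fintype.card_fin]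
  refine ⟨?_, hdim⟩
  -- membership of elements of H in the normal form set
  have hNF : ∀ h : H, ((h : pauliGroup d n ζ hζ0) : QV d n ≃ₗ[ℂ] QV d n) ∈ NFset d n ζ :=
    fun h => pauliGroup_le_NFgroup hζ0 h1 (h : pauliGroup d n ζ hζ0).2
  -- H is finite
  have hfin : Finite H := by
    let T : Finset ℂ := insert 0 (Polynomial.nthRootsFinset (dbar d) (1 : ℂ))
    let Φ : H → ((Fin n → ZMod d) → (Fin n → ZMod d) → T) := fun h v w =>
      ⟨((h : pauliGroup d n ζ hζ0) : QV d n ≃ₗ[ℂ] QV d n) (Pi.single v 1) w, by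
        rcases NF_entry h1 (hNF h) v w with h0 | h0
        · rw [h0]; exact Finset.mem_insert_self _ _
        · exact Finset.mem_insert_of_mem
            ((Polynomial.mem_nthRootsFinset (dbar_pos d) (1 : ℂ)).mpr h0)⟩
    have hinj : Function.Injective Φ := by
      intro g g' hgg
      apply Subtype.ext
      apply Subtype.ext
      apply LinearEquiv.toLinearMap_injective
      apply Module.Basis.ext (Pi.basisFun ℂ (Fin n → ZMod d))
      intro v
      funext w
      have := congrFun (congrFun hgg v) w
      rw [Subtype.ext_iff] at this
      simpa [Φ, Pi.basisFun_apply] using this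
    exact Finite.of_injective Φ hinj
  letI : Fintype H := Fintype.ofFinite H
  have hN0 : (Nat.card H : ℂ) ≠ 0 := by
    have : 0 < Nat.card H := Nat.card_pos
    exact_mod_cast this.ne'
  -- the averaging projector
  set ρ : H → (QV d n →ₗ[ℂ] QV d n) := fun h =>
    (((h : pauliGroup d n ζ hζ0) : QV d n ≃ₗ[ℂ] QV d n) : QV d n →ₗ[ℂ] QV d n) with hρ
  set π : QV d n →ₗ[ℂ] QV d n := (Nat.card H : ℂ)⁻¹ • ∑ h : H, ρ h with hπ
  have mem_fixed : ∀ v : QV d n, v ∈ fixedSpace H ↔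
      ∀ g ∈ H, (g : QV d n ≃ₗ[ℂ] QV d n) v = v := fun _ => Iff.rfl
  have hπ_apply : ∀ x : QV d n, π x = (Nat.card H : ℂ)⁻¹ • ∑ h : H, ρ h x := by
    intro x
    rw [hπ, LinearMap.smul_apply, LinearMap.sum_apply]
  have hproj : LinearMap.IsProj (fixedSpace H) π := by
    constructor
    · intro x
      rw [mem_fixed]
      intro g hg
      rw [hπ_apply, map_smul, map_sum]
      congr 1
      have hterm : ∀ h : H, (g : QV d n ≃ₗ[ℂ] QV d n) (ρ h x) = ρ (⟨g, hg⟩ * h) x :=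
        fun h => rfl
      rw [Finset.sum_congr rfl (fun h _ => hterm h)]
      exact Fintype.sum_equiv (Equiv.mulLeft (⟨g, hg⟩ : H))
        (fun h => ρ (⟨g, hg⟩ * h) x) (fun h => ρ h x) (fun h => rfl)
    · intro x hx
      rw [hπ_apply]
      have : ∀ h : H, ρ h x = x := fun h => hx (h : pauliGroup d n ζ hζ0) h.2
      rw [Finset.sum_congr rfl (fun h _ => this h), Finset.sum_const, Finset.card_univ,
        ← Nat.card_eq_fintype_card, ← Nat.cast_smul_eq_nsmul ℂ, smul_smul,
        inv_mul_cancel₀ hN0, one_smul]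
  have htr1 : LinearMap.trace ℂ (QV d n) π = (Module.finrank ℂ (fixedSpace H) : ℂ) :=
    hproj.trace
  -- sum of traces
  have htr_sum : ∑ h : H, LinearMap.trace ℂ (QV d n) (ρ h) = ((d : ℂ) ^ n) := by
    rw [Finset.sum_eq_single (1 : H)]
    · have hρ1 : ρ (1 : H) = LinearMap.id := rfl
      rw [hρ1]
      have : (LinearMap.id : QV d n →ₗ[ℂ] QV d n) = 1 := rfl
      rw [this, LinearMap.trace_one, hdim]
      push_cast
      ring_nf
    · intro h _ hne
      obtain ⟨a, b, c, Hf⟩ := hNF h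
      by_cases hbc : b = 0 ∧ c = 0
      · exfalso
        obtain ⟨hb, hc⟩ := hbc
        subst hb; subst hc
        have hsc : ∀ (f : QV d n) (w : Fin n → ZMod d),
            ((h : pauliGroup d n ζ hζ0) : QV d n ≃ₗ[ℂ] QV d n) f w = ζ ^ a * f w := by
          intro f w
          rw [Hf]
          simp [eph_zero]
        have := hscal (h : pauliGroup d n ζ hζ0) h.2
          ⟨(a : ℤ), eq_sP_pow_of_scalar hζ0 _ a hsc⟩
        exact hne (Subtype.ext this)
      · have hor : b ≠ 0 ∨ c ≠ 0 := by tauto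
        exact trace_of_NF hξp a b c Hf hor
    · intro h
      exact absurd (Finset.mem_univ _) h
  have htr2 : LinearMap.trace ℂ (QV d n) π = (Nat.card H : ℂ)⁻¹ * (d : ℂ) ^ n := by
    rw [hπ, map_smul, map_sum, htr_sum, smul_eq_mul]
  have key : (Module.finrank ℂ (fixedSpace H) : ℂ) * (Nat.card H : ℂ) = (d : ℂ) ^ n := by
    rw [← htr1, htr2]
    field_simp
  rw [hdim]
  exact_mod_cast key


end QuditPauli
end
end
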